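/- Let $\{X_{\mathbf{n}}, \mathbf{n}\in\mathbb{Z}^d_+\}$ be a $d$-dimensional array of pairwise independent random vectors in a real separable Hilbert space $\mathcal{H}$ with mean zero ($\mathbb{E}X_{\mathbf{i}}=0$ for all $\mathbf{i}$) and finite second moments. Then there exists a constant $C>0$ (depending only on $d$) such that for all $\mathbf{n}=(n_1,\dots,n_d)$: $\mathbb{E}\big(\max_{\mathbf{1}\prec\mathbf{k}\prec\mathbf{n}}\|\sum_{\mathbf{i}\prec\mathbf{k}} X_{\mathbf{i}}\|^2\big) \le C\,\log^2(2n_1)\log^2(2n_2)\cdots\log^2(2n_d)\,\sum_{\mathbf{i}\prec\mathbf{n}}\mathbb{E}\|X_{\mathbf{i}}\|^2$. -/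

import Mathlib

open MeasureTheory Filter Finset ProbabilityTheory

namespace MIaux

/-! ### Elementary dyadic decomposition of `[1, k]` in `ℕ` -/

/-- dyadic anchor: largest multiple of `2^j` that is `≤ k`. -/
def anch (j k : ℕ) : ℕ := 2 ^ j * (k / 2 ^ j)

lemma anch_zero (k : ℕ) : anch 0 k = k := by simp [anch]

lemma anch_le_self (j k : ℕ) : anch j k ≤ k := Nat.mul_div_le k (2 ^ j)

lemma anch_succ_le (j k : ℕ) : anch (j+1) k ≤ anch j k := by
  unfold anch
  rw [pow_succ, ← Nat.div_div_eq_div_mul, Nat.mul_comm (2 ^ j) 2, Nat.mul_comm 2 (2^j),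
    Nat.mul_assoc]
  exact Nat.mul_le_mul_left _ (by omega)

lemma anch_antitone {j j' k : ℕ} (h : j ≤ j') : anch j' k ≤ anch j k := by
  induction j' with
  | zero => simp_all
  | succ m ih =>
    rcases Nat.lt_or_ge j (m+1) with h'|h'
    · exact (anch_succ_le m k).trans (ih (Nat.lt_succ_iff.mp h'))
    · have : j = m + 1 := le_antisymm h h'
      subst this; rfl

lemma anch_eq_zero {j k : ℕ} (h : k < 2 ^ j) : anch j k = 0 := by
  unfold anch; rw [Nat.div_eq_of_lt h, Nat.mul_zero]

/-- the dyadic level of `i` within `[1,k]`. -/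
def lvl (k i : ℕ) : ℕ := Nat.findGreatest (fun j => i ≤ anch j k) k

lemma lvl_spec {k i : ℕ} (hik : i ≤ k) : i ≤ anch (lvl k i) k := by
  have h0 : i ≤ anch 0 k := by rwa [anch_zero]
  exact Nat.findGreatest_spec (P := fun j => i ≤ anch j k) (Nat.zero_le k) h0

lemma lvl_le {k i : ℕ} : lvl k i ≤ k := Nat.findGreatest_le k

lemma lvl_spec_succ {k i : ℕ} (hi : 1 ≤ i) (hik : i ≤ k) : anch (lvl k i + 1) k < i := by
  rcases Nat.lt_or_ge k (lvl k i + 1) with h|h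
  · have hlk : lvl k i = k := le_antisymm lvl_le (Nat.lt_succ_iff.mp h)
    have hz : anch (k+1) k = 0 :=
      anch_eq_zero (Nat.lt_of_lt_of_le (Nat.lt_two_pow_self (n := k))
        (Nat.pow_le_pow_right (by norm_num) (Nat.le_succ k)))
    rw [hlk, hz]; exact hi
  · by_contra hc
    push_neg at hc
    exact Nat.findGreatest_is_greatest (P := fun j => i ≤ anch j k)
      (Nat.lt_succ_self _) h hc

lemma lvl_lt {k i m : ℕ} (hi : 1 ≤ i) (hik : i ≤ k) (hm : k < 2 ^ m) : lvl k i < m := by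
  by_contra hc
  push_neg at hc
  have h1 : i ≤ anch (lvl k i) k := lvl_spec hik
  have : anch (lvl k i) k = 0 :=
    anch_eq_zero (hm.trans_le (Nat.pow_le_pow_right (by norm_num) hc))
  omega

lemma lvl_eq_iff {k i j : ℕ} (hi : 1 ≤ i) (hik : i ≤ k) :
    lvl k i = j ↔ (anch (j+1) k < i ∧ i ≤ anch j k) := by
  constructor
  · rintro rfl; exact ⟨lvl_spec_succ hi hik, lvl_spec hik⟩
  · rintro ⟨h1, h2⟩
    rcases Nat.lt_trichotomy (lvl k i) j with h|h|h
    · have : i ≤ anch (lvl k i + 1) k := h2.trans (anch_antitone h)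
      exact absurd this (not_le.mpr (lvl_spec_succ hi hik))
    · exact h
    · have : i ≤ anch (j+1) k := (lvl_spec hik).trans (anch_antitone h)
      omega

/-- if the level-`j` block of `[1,k]` is nonempty then its top is anchor + `2^j`. -/
lemma anch_eq_of_lt {j k : ℕ} (h : anch (j+1) k < anch j k) :
    anch j k = anch (j+1) k + 2 ^ j := by
  have hq : k / 2 ^ (j+1) = k / 2 ^ j / 2 := by rw [pow_succ, Nat.div_div_eq_div_mul]
  unfold anch at *
  rw [hq] at h ⊢
  set b := k / 2 ^ j with hb
  have h2 : 2 * (b/2) < b := by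
    have h' : 2 ^ j * (2 * (b/2)) < 2 ^ j * b := by
      calc 2 ^ j * (2 * (b/2)) = 2 ^ (j+1) * (b/2) := by ring
      _ < 2 ^ j * b := h
    exact Nat.lt_of_mul_lt_mul_left h'
  have hb1 : b = 2 * (b/2) + 1 := by omega
  calc 2 ^ j * b = 2 ^ j * (2 * (b/2) + 1) := by rw [← hb1]
  _ = 2 ^ (j+1) * (b/2) + 2 ^ j := by ring

lemma pos_recover {j t i : ℕ} (h1 : 2^(j+1) * t < i) (h2 : i ≤ 2^(j+1) * t + 2^j) :
    (i - 1) / 2^(j+1) = t := by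
  have e : 2^(j+1)*t = t*2^(j+1) := mul_comm _ _
  rw [e] at h1 h2
  apply Nat.div_eq_of_lt_le
  · omega
  · have hlt : (2:ℕ) ^ j < 2 ^ (j+1) := Nat.pow_lt_pow_succ (by norm_num)
    have hs : (t+1) * 2^(j+1) = t*2^(j+1) + 2^(j+1) := by rw [add_mul, one_mul]
    show i - 1 < (t+1) * 2^(j+1)
    omega

/-! ### Probabilistic lemmas: orthogonality from pairwise independence -/

variable {Ω H : Type*} [MeasurableSpace Ω]
  [NormedAddCommGroup H] [InnerProductSpace ℝ H] [CompleteSpace H]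
  [SecondCountableTopology H] [MeasurableSpace H] [BorelSpace H]
  {P : Measure Ω} [IsProbabilityMeasure P]

local notation "⟪" x ", " y "⟫" => @inner ℝ _ _ x y

lemma integrable_of_sq {X : Ω → H} (hm : Measurable X)
    (h2 : Integrable (fun ω => ‖X ω‖^2) P) : Integrable X P := by
  refine Integrable.mono' ((integrable_const (1:ℝ)).add h2) hm.aestronglyMeasurable ?_
  filter_upwards with ω
  have h := norm_nonneg (X ω)
  simp only [Pi.add_apply, norm_norm]
  nlinarith [sq_nonneg (‖X ω‖ - 1)]

lemma integrable_inner {X Y : Ω → H} (hmX : Measurable X) (hmY : Measurable Y)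
    (h2X : Integrable (fun ω => ‖X ω‖^2) P) (h2Y : Integrable (fun ω => ‖Y ω‖^2) P) :
    Integrable (fun ω => ⟪X ω, Y ω⟫) P := by
  refine Integrable.mono' (h2X.add h2Y) (hmX.inner hmY).aestronglyMeasurable ?_
  filter_upwards with ω
  have h1 := abs_real_inner_le_norm (X ω) (Y ω)
  have h2 := sq_nonneg (‖X ω‖ - ‖Y ω‖)
  have := norm_nonneg (X ω); have := norm_nonneg (Y ω)
  simp only [Pi.add_apply]
  rw [Real.norm_eq_abs]
  nlinarith

lemma indep_inner_zero {X Y : Ω → H} (hmX : Measurable X) (hmY : Measurable Y)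
    (h2X : Integrable (fun ω => ‖X ω‖^2) P) (h2Y : Integrable (fun ω => ‖Y ω‖^2) P)
    (hY0 : ∫ ω, Y ω ∂P = 0) (hind : IndepFun X Y P) :
    ∫ ω, ⟪X ω, Y ω⟫ ∂P = 0 := by
  have hiX := integrable_of_sq hmX h2X
  have hiY := integrable_of_sq hmY h2Y
  have hmap := (indepFun_iff_map_prod_eq_prod_map_map hmX.aemeasurable hmY.aemeasurable).mp hind
  have hmprod : AEMeasurable (fun ω => (X ω, Y ω)) P := (hmX.prodMk hmY).aemeasurable
  have hcont : Continuous (fun p : H × H => ⟪p.1, p.2⟫) := continuous_inner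
  have step1 : ∫ ω, ⟪X ω, Y ω⟫ ∂P
      = ∫ p : H × H, ⟪p.1, p.2⟫ ∂(P.map (fun ω => (X ω, Y ω))) :=
    (integral_map hmprod hcont.aestronglyMeasurable).symm
  rw [step1, hmap]
  have hnX : Integrable (fun x : H => ‖x‖) (P.map X) := by
    rw [integrable_map_measure (continuous_norm.aestronglyMeasurable) hmX.aemeasurable]
    exact hiX.norm
  have hnY : Integrable (fun y : H => ‖y‖) (P.map Y) := by
    rw [integrable_map_measure (continuous_norm.aestronglyMeasurable) hmY.aemeasurable]
    exact hiY.norm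
  have hInt : Integrable (fun p : H × H => ⟪p.1, p.2⟫) ((P.map X).prod (P.map Y)) := by
    refine Integrable.mono' (hnX.mul_prod hnY) hcont.aestronglyMeasurable ?_
    filter_upwards with p
    rw [Real.norm_eq_abs]
    exact abs_real_inner_le_norm p.1 p.2
  rw [integral_prod _ hInt]
  have hid : Integrable (fun y : H => y) (P.map Y) :=
    (integrable_map_measure measurable_id.aestronglyMeasurable hmY.aemeasurable).mpr hiY
  have hYint : ∫ y : H, y ∂(P.map Y) = 0 := by
    have h := integral_map (μ := P) (φ := Y) (f := fun y : H => y) hmY.aemeasurable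
      measurable_id.aestronglyMeasurable
    simpa [hY0] using h
  have hz : ∀ x : H, ∫ y : H, ⟪x, y⟫ ∂(P.map Y) = (0:ℝ) := by
    intro x
    rw [integral_inner hid x, hYint, inner_zero_right]
  simp only [hz, integral_zero]

variable {ι : Type*} [DecidableEq ι]

omit [MeasurableSpace Ω] [CompleteSpace H] [SecondCountableTopology H] [MeasurableSpace H]
  [BorelSpace H] [DecidableEq ι] in
lemma norm_sq_sum_expand (s : Finset ι) (X : ι → Ω → H) (ω : Ω) :
    ‖∑ i ∈ s, X i ω‖^2 = ∑ i ∈ s, ∑ j ∈ s, ⟪X i ω, X j ω⟫ := by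
  rw [← real_inner_self_eq_norm_sq, sum_inner]
  simp_rw [inner_sum]

lemma integrable_norm_sq_sum (s : Finset ι) {X : ι → Ω → H}
    (hm : ∀ i, Measurable (X i)) (h2 : ∀ i, Integrable (fun ω => ‖X i ω‖^2) P) :
    Integrable (fun ω => ‖∑ i ∈ s, X i ω‖^2) P := by
  have : (fun ω => ‖∑ i ∈ s, X i ω‖^2)
      = fun ω => ∑ i ∈ s, ∑ j ∈ s, ⟪X i ω, X j ω⟫ := by
    funext ω; exact norm_sq_sum_expand s X ω
  rw [this]
  exact integrable_finset_sum s fun i _ =>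
    integrable_finset_sum s fun j _ => integrable_inner (hm i) (hm j) (h2 i) (h2 j)

omit [DecidableEq ι] in
lemma pythagoras_le (s : Finset ι) {X : ι → Ω → H}
    (hm : ∀ i, Measurable (X i)) (h2 : ∀ i, Integrable (fun ω => ‖X i ω‖^2) P)
    (h0 : ∀ i, ∫ ω, X i ω ∂P = 0)
    (hind : ∀ i j, i ≠ j → IndepFun (X i) (X j) P) :
    ∫ ω, ‖∑ i ∈ s, X i ω‖^2 ∂P ≤ ∑ i ∈ s, ∫ ω, ‖X i ω‖^2 ∂P := by
  classical
  have hexp : ∫ ω, ‖∑ i ∈ s, X i ω‖^2 ∂P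
      = ∑ i ∈ s, ∑ j ∈ s, ∫ ω, ⟪X i ω, X j ω⟫ ∂P := by
    simp_rw [norm_sq_sum_expand s X]
    rw [integral_finset_sum s fun i _ => integrable_finset_sum s fun j _ =>
      integrable_inner (hm i) (hm j) (h2 i) (h2 j)]
    exact Finset.sum_congr rfl fun i _ => integral_finset_sum s fun j _ =>
      integrable_inner (hm i) (hm j) (h2 i) (h2 j)
  rw [hexp]
  apply le_of_eq
  refine Finset.sum_congr rfl fun i hi => ?_
  rw [Finset.sum_eq_single i]
  · simp_rw [real_inner_self_eq_norm_sq]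
  · intro j hj hne
    exact indep_inner_zero (hm i) (hm j) (h2 i) (h2 j) (h0 j) (hind i j (Ne.symm hne))
  · exact fun h => absurd hi h

/-! ### d-dimensional dyadic combinatorics -/

variable {d : ℕ}

def Jset (n : Fin d → ℕ) : Finset (Fin d → ℕ) :=
  Fintype.piFinset fun c => Finset.range (Nat.size (n c))

def Tset (n j : Fin d → ℕ) : Finset (Fin d → ℕ) :=
  Fintype.piFinset fun c => Finset.range (n c / 2 ^ (j c + 1) + 1)

def Wset (n j t : Fin d → ℕ) : Finset (Fin d → ℕ) :=
  (Finset.Icc 1 n).filter fun i =>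
    ∀ c, 2 ^ (j c + 1) * t c < i c ∧ i c ≤ 2 ^ (j c + 1) * t c + 2 ^ (j c)

def lvlv (k i : Fin d → ℕ) : Fin d → ℕ := fun c => lvl (k c) (i c)

lemma mem_Icc_pi {a b i : Fin d → ℕ} :
    i ∈ Finset.Icc a b ↔ ∀ c, a c ≤ i c ∧ i c ≤ b c := by
  simp [Finset.mem_Icc, Pi.le_def, forall_and]

lemma lvlv_maps {n k : Fin d → ℕ} (hk : k ∈ Finset.Icc 1 n) :
    ∀ i ∈ Finset.Icc 1 k, lvlv k i ∈ Jset n := by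
  intro i hi
  rw [mem_Icc_pi] at hi
  rw [mem_Icc_pi] at hk
  rw [Jset, Fintype.mem_piFinset]
  intro c
  rw [Finset.mem_range]
  exact lvl_lt (hi c).1 (hi c).2 (((hk c).2).trans_lt (Nat.lt_size_self (n c)))

/-- decomposition of a rectangle sum into dyadic fibers. -/
lemma sum_decomp {M : Type*} [AddCommMonoid M] {n k : Fin d → ℕ} (hk : k ∈ Finset.Icc 1 n)
    (v : (Fin d → ℕ) → M) :
    ∑ i ∈ Finset.Icc 1 k, v i
      = ∑ j ∈ Jset n, ∑ i ∈ (Finset.Icc 1 k).filter fun i => lvlv k i = j, v i :=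
  (Finset.sum_fiberwise_of_maps_to (lvlv_maps hk) v).symm

/-- the fiber is either empty or a canonical dyadic block. -/
lemma fiber_eq_block {n k j : Fin d → ℕ} (hk : k ∈ Finset.Icc 1 n)
    (hne : ((Finset.Icc 1 k).filter fun i => lvlv k i = j).Nonempty) :
    ((Finset.Icc 1 k).filter fun i => lvlv k i = j)
      = Wset n j (fun c => k c / 2 ^ (j c + 1))
      ∧ (fun c => k c / 2 ^ (j c + 1)) ∈ Tset n j := by
  rw [mem_Icc_pi] at hk
  obtain ⟨i₀, hi₀⟩ := hne
  rw [Finset.mem_filter, mem_Icc_pi] at hi₀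
  obtain ⟨hi₀m, hi₀l⟩ := hi₀
  have key : ∀ c, anch (j c) (k c) = 2 ^ (j c + 1) * (k c / 2 ^ (j c + 1)) + 2 ^ (j c) := by
    intro c
    have h := (lvl_eq_iff (hi₀m c).1 (hi₀m c).2).mp (congrFun hi₀l c)
    have hlt : anch (j c + 1) (k c) < anch (j c) (k c) := lt_of_lt_of_le h.1 h.2
    simpa [anch] using anch_eq_of_lt hlt
  constructor
  · ext i
    rw [Finset.mem_filter, mem_Icc_pi, Wset, Finset.mem_filter, mem_Icc_pi]
    constructor
    · rintro ⟨him, hil⟩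
      refine ⟨fun c => ⟨(him c).1, (him c).2.trans (hk c).2⟩, fun c => ?_⟩
      have h := (lvl_eq_iff (him c).1 (him c).2).mp (congrFun hil c)
      have h1 := h.1
      have h2 := h.2
      rw [key c] at h2
      constructor
      · simpa [anch] using h1
      · exact h2
    · rintro ⟨him, hio⟩
      have hik : ∀ c, i c ≤ k c := by
        intro c
        have : i c ≤ anch (j c) (k c) := by rw [key c]; exact (hio c).2
        exact this.trans (anch_le_self _ _)
      refine ⟨fun c => ⟨(him c).1, hik c⟩, ?_⟩
      funext c
      show lvl (k c) (i c) = j c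
      rw [lvl_eq_iff (him c).1 (hik c)]
      refine ⟨?_, ?_⟩
      · simpa [anch] using (hio c).1
      · rw [key c]; exact (hio c).2
  · rw [Tset, Fintype.mem_piFinset]
    intro c
    rw [Finset.mem_range, Nat.lt_succ_iff]
    exact Nat.div_le_div_right (hk c).2

/-- each term of the dyadic decomposition is dominated by the sum over canonical blocks. -/
lemma block_le {H : Type*} [NormedAddCommGroup H] {n k j : Fin d → ℕ}
    (hk : k ∈ Finset.Icc 1 n) (v : (Fin d → ℕ) → H) :
    ‖∑ i ∈ (Finset.Icc 1 k).filter fun i => lvlv k i = j, v i‖ ^ 2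
      ≤ ∑ t ∈ Tset n j, ‖∑ i ∈ Wset n j t, v i‖ ^ 2 := by
  rcases ((Finset.Icc 1 k).filter fun i => lvlv k i = j).eq_empty_or_nonempty with h|h
  · rw [h]
    simp only [Finset.sum_empty, norm_zero]
    rw [zero_pow (by norm_num : (2:ℕ) ≠ 0)]
    exact Finset.sum_nonneg fun t _ => sq_nonneg _
  · obtain ⟨heq, hT⟩ := fiber_eq_block hk h
    rw [heq]
    exact Finset.single_le_sum (f := fun t => ‖∑ i ∈ Wset n j t, v i‖ ^ 2)
      (fun t _ => sq_nonneg _) hT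

/-- blocks at a fixed level `j` are disjoint. -/
lemma blocks_disjoint_sum (n j : Fin d → ℕ) (e : (Fin d → ℕ) → ℝ) (he : ∀ i, 0 ≤ e i) :
    ∑ t ∈ Tset n j, ∑ i ∈ Wset n j t, e i ≤ ∑ i ∈ Finset.Icc 1 n, e i := by
  have hsub : ∀ t, Wset n j t
      ⊆ (Finset.Icc 1 n).filter fun i => (fun c => (i c - 1) / 2 ^ (j c + 1)) = t := by
    intro t i hi
    rw [Wset, Finset.mem_filter] at hi
    rw [Finset.mem_filter]
    refine ⟨hi.1, funext fun c => pos_recover (hi.2 c).1 (hi.2 c).2⟩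
  calc ∑ t ∈ Tset n j, ∑ i ∈ Wset n j t, e i
      ≤ ∑ t ∈ Tset n j, ∑ i ∈ (Finset.Icc 1 n).filter
          fun i => (fun c => (i c - 1) / 2 ^ (j c + 1)) = t, e i := by
        exact Finset.sum_le_sum fun t _ =>
          Finset.sum_le_sum_of_subset_of_nonneg (hsub t) (fun i _ _ => he i)
    _ = ∑ i ∈ Finset.Icc 1 n, e i := by
        apply Finset.sum_fiberwise_of_maps_to
        intro i hi
        rw [mem_Icc_pi] at hi
        rw [Tset, Fintype.mem_piFinset]
        intro c
        rw [Finset.mem_range, Nat.lt_succ_iff]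
        exact Nat.div_le_div_right ((Nat.sub_le (i c) 1).trans (hi c).2)

/-- Cauchy–Schwarz for norms of sums. -/
lemma norm_sq_sum_le {H : Type*} [NormedAddCommGroup H] {ι : Type*} (s : Finset ι) (y : ι → H) :
    ‖∑ j ∈ s, y j‖^2 ≤ (s.card : ℝ) * ∑ j ∈ s, ‖y j‖^2 := by
  calc ‖∑ j ∈ s, y j‖^2 ≤ (∑ j ∈ s, ‖y j‖)^2 := by
        apply pow_le_pow_left₀ (norm_nonneg _) (norm_sum_le s y)
  _ ≤ (s.card : ℝ) * ∑ j ∈ s, ‖y j‖^2 := sq_sum_le_card_mul_sum_sq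

/-- the pointwise maximal bound. -/
lemma pointwise_le {H : Type*} [NormedAddCommGroup H] {n : Fin d → ℕ}
    (v : (Fin d → ℕ) → H) {k : Fin d → ℕ} (hk : k ∈ Finset.Icc 1 n) :
    ‖∑ i ∈ Finset.Icc 1 k, v i‖ ^ 2
      ≤ ((Jset n).card : ℝ) * ∑ j ∈ Jset n, ∑ t ∈ Tset n j, ‖∑ i ∈ Wset n j t, v i‖ ^ 2 := by
  calc ‖∑ i ∈ Finset.Icc 1 k, v i‖ ^ 2
      = ‖∑ j ∈ Jset n, ∑ i ∈ (Finset.Icc 1 k).filter fun i => lvlv k i = j, v i‖ ^ 2 := by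
        rw [← sum_decomp hk v]
    _ ≤ ((Jset n).card : ℝ) * ∑ j ∈ Jset n,
          ‖∑ i ∈ (Finset.Icc 1 k).filter fun i => lvlv k i = j, v i‖ ^ 2 :=
        norm_sq_sum_le _ _
    _ ≤ ((Jset n).card : ℝ) * ∑ j ∈ Jset n, ∑ t ∈ Tset n j, ‖∑ i ∈ Wset n j t, v i‖ ^ 2 :=
        mul_le_mul_of_nonneg_left (Finset.sum_le_sum fun j _ => block_le hk v)
          (Nat.cast_nonneg _)

/-! ### Size and logarithm estimates -/

lemma size_le_log {n : ℕ} (hn : 1 ≤ n) :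
    (Nat.size n : ℝ) ≤ (Real.log 2)⁻¹ * Real.log (2 * n) := by
  have hl2 : 0 < Real.log 2 := Real.log_pos (by norm_num)
  have hpow : (2:ℕ) ^ Nat.size n ≤ 2 * n := by
    have h1 : 0 < Nat.size n := Nat.size_pos.mpr hn
    have h2 : ¬ n < 2 ^ (Nat.size n - 1) := by
      intro hc
      have := Nat.size_le.mpr hc
      omega
    push_neg at h2
    calc (2:ℕ) ^ Nat.size n = 2 * 2 ^ (Nat.size n - 1) := by
          rw [← pow_succ']
          congr 1
          omega
      _ ≤ 2 * n := by omega
  have hlog : (Nat.size n : ℝ) * Real.log 2 ≤ Real.log (2 * n) := by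
    rw [← Real.log_pow]
    apply Real.log_le_log (by positivity)
    exact_mod_cast hpow
  rw [inv_mul_eq_div, le_div_iff₀ hl2]
  exact hlog

lemma card_sq_le {n : Fin d → ℕ} (hn : ∀ c, 1 ≤ n c) :
    ((Jset n).card : ℝ) ^ 2
      ≤ (Real.log 2)⁻¹ ^ (2 * d) * ∏ c, Real.log (2 * (n c : ℝ)) ^ 2 := by
  have hl2 : 0 < Real.log 2 := Real.log_pos (by norm_num)
  have hrhs : (Real.log 2)⁻¹ ^ (2 * d) * ∏ c, Real.log (2 * (n c : ℝ)) ^ 2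
      = ∏ c : Fin d, ((Real.log 2)⁻¹ * Real.log (2 * (n c : ℝ))) ^ 2 := by
    simp_rw [mul_pow]
    rw [Finset.prod_mul_distrib, Finset.prod_const, Finset.card_univ, Fintype.card_fin,
      ← pow_mul]
  have hcard : (Jset n).card = ∏ c, Nat.size (n c) := by
    rw [Jset, Fintype.card_piFinset]; simp
  rw [hrhs, hcard]
  push_cast
  rw [← Finset.prod_pow]
  apply Finset.prod_le_prod
  · intro c _; positivity
  · intro c _
    have h := size_le_log (hn c)
    have hnn : (0:ℝ) ≤ (Nat.size (n c) : ℝ) := Nat.cast_nonneg _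
    apply pow_le_pow_left₀ hnn
    push_cast at h ⊢
    exact h

/-! ### Core integral bound -/

theorem main_core {n : Fin d → ℕ} (hn : ∀ c, 1 ≤ n c) (X : (Fin d → ℕ) → Ω → H)
    (hm : ∀ i, Measurable (X i))
    (h2 : ∀ i, Integrable (fun ω => ‖X i ω‖ ^ 2) P)
    (h0 : ∀ i, ∫ ω, X i ω ∂P = 0)
    (hind : ∀ i j, i ≠ j → IndepFun (X i) (X j) P) :
    ∫ ω, ((((Finset.Icc 1 n).sup fun k => ‖∑ i ∈ Finset.Icc 1 k, X i ω‖₊ : NNReal) : ℝ)) ^ 2 ∂P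
      ≤ ((Jset n).card : ℝ) ^ 2 * ∑ i ∈ Finset.Icc 1 n, ∫ ω, ‖X i ω‖ ^ 2 ∂P := by
  set e : (Fin d → ℕ) → ℝ := fun i => ∫ ω, ‖X i ω‖ ^ 2 ∂P with he_def
  have he : ∀ i, 0 ≤ e i := fun i => integral_nonneg fun ω => sq_nonneg _
  set G : Ω → ℝ := fun ω =>
    ((Jset n).card : ℝ) * ∑ j ∈ Jset n, ∑ t ∈ Tset n j, ‖∑ i ∈ Wset n j t, X i ω‖ ^ 2 with hG_def
  have hGint : Integrable G P := by
    apply Integrable.const_mul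
    exact integrable_finset_sum _ fun j _ =>
      integrable_finset_sum _ fun t _ => integrable_norm_sq_sum _ hm h2
  have hne : (Finset.Icc (1 : Fin d → ℕ) n).Nonempty := by
    refine ⟨1, Finset.mem_Icc.mpr ⟨le_refl _, ?_⟩⟩
    intro c; exact hn c
  have hpt : ∀ ω,
      ((((Finset.Icc 1 n).sup fun k => ‖∑ i ∈ Finset.Icc 1 k, X i ω‖₊ : NNReal) : ℝ)) ^ 2
        ≤ G ω := by
    intro ω
    obtain ⟨k₀, hk₀, hsup⟩ := Finset.exists_mem_eq_sup (Finset.Icc 1 n) hne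
      (fun k => (‖∑ i ∈ Finset.Icc 1 k, X i ω‖₊ : NNReal))
    rw [hsup, coe_nnnorm]
    exact pointwise_le (fun i => X i ω) hk₀
  have step1 : ∫ ω, ((((Finset.Icc 1 n).sup
        fun k => ‖∑ i ∈ Finset.Icc 1 k, X i ω‖₊ : NNReal) : ℝ)) ^ 2 ∂P ≤ ∫ ω, G ω ∂P := by
    apply integral_mono_of_nonneg
    · filter_upwards with ω; positivity
    · exact hGint
    · filter_upwards with ω; exact hpt ω
  refine step1.trans ?_
  have step2 : ∫ ω, G ω ∂P = ((Jset n).card : ℝ) *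
      ∑ j ∈ Jset n, ∑ t ∈ Tset n j, ∫ ω, ‖∑ i ∈ Wset n j t, X i ω‖ ^ 2 ∂P := by
    rw [hG_def, integral_const_mul]
    congr 1
    rw [integral_finset_sum _ fun j _ => integrable_finset_sum _ fun t _ =>
      integrable_norm_sq_sum _ hm h2]
    exact Finset.sum_congr rfl fun j _ => integral_finset_sum _ fun t _ =>
      integrable_norm_sq_sum _ hm h2
  rw [step2]
  have step3 : ∑ j ∈ Jset n, ∑ t ∈ Tset n j, ∫ ω, ‖∑ i ∈ Wset n j t, X i ω‖ ^ 2 ∂P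
      ≤ ((Jset n).card : ℝ) * ∑ i ∈ Finset.Icc 1 n, e i := by
    calc ∑ j ∈ Jset n, ∑ t ∈ Tset n j, ∫ ω, ‖∑ i ∈ Wset n j t, X i ω‖ ^ 2 ∂P
        ≤ ∑ j ∈ Jset n, ∑ t ∈ Tset n j, ∑ i ∈ Wset n j t, e i := by
          refine Finset.sum_le_sum fun j _ => Finset.sum_le_sum fun t _ => ?_
          exact pythagoras_le _ hm h2 h0 hind
      _ ≤ ∑ j ∈ Jset n, ∑ i ∈ Finset.Icc 1 n, e i :=
          Finset.sum_le_sum fun j _ => blocks_disjoint_sum n j e he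
      _ = ((Jset n).card : ℝ) * ∑ i ∈ Finset.Icc 1 n, e i := by
          rw [Finset.sum_const, nsmul_eq_mul]
  calc ((Jset n).card : ℝ) *
      ∑ j ∈ Jset n, ∑ t ∈ Tset n j, ∫ ω, ‖∑ i ∈ Wset n j t, X i ω‖ ^ 2 ∂P
      ≤ ((Jset n).card : ℝ) * (((Jset n).card : ℝ) * ∑ i ∈ Finset.Icc 1 n, e i) :=
        mul_le_mul_of_nonneg_left step3 (Nat.cast_nonneg _)
    _ = ((Jset n).card : ℝ) ^ 2 * ∑ i ∈ Finset.Icc 1 n, e i := by ring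

end MIaux

open MIaux in
/-- Lemma 2.4: d-dimensional Rademacher–Menshov / Móricz type maximal inequality for
pairwise independent mean-zero Hilbert-space-valued random vectors. -/
theorem maximal_inequality_d_dim
    {Ω H : Type*} [MeasurableSpace Ω]
    [NormedAddCommGroup H] [InnerProductSpace ℝ H] [CompleteSpace H]
    [SecondCountableTopology H] [MeasurableSpace H] [BorelSpace H]
    (P : Measure Ω) [IsProbabilityMeasure P] (d : ℕ) (hd : 0 < d) :
    ∃ C > (0 : ℝ), ∀ X : (Fin d → ℕ) → Ω → H,
      (∀ i, Measurable (X i)) →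
      (∀ i, Integrable (fun ω => ‖X i ω‖ ^ 2) P) →
      (∀ i, ∫ ω, X i ω ∂P = 0) →
      (∀ i j, i ≠ j → IndepFun (X i) (X j) P) →
      ∀ n : Fin d → ℕ,
        ∫ ω, ((((Finset.Icc 1 n).sup fun k =>
            ‖∑ i ∈ Finset.Icc 1 k, X i ω‖₊ : NNReal) : ℝ)) ^ 2 ∂P ≤
          C * (∏ j, Real.log (2 * n j) ^ 2) *
            ∑ i ∈ Finset.Icc 1 n, ∫ ω, ‖X i ω‖ ^ 2 ∂P := by
  have hl2 : 0 < Real.log 2 := Real.log_pos (by norm_num)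
  refine ⟨(Real.log 2)⁻¹ ^ (2 * d), by positivity, ?_⟩
  intro X hm h2 h0 hind n
  by_cases hn : ∀ c, 1 ≤ n c
  · have hmain := main_core hn X hm h2 h0 hind (P := P)
    refine hmain.trans ?_
    have hS : 0 ≤ ∑ i ∈ Finset.Icc 1 n, ∫ ω, ‖X i ω‖ ^ 2 ∂P :=
      Finset.sum_nonneg fun i _ => integral_nonneg fun ω => sq_nonneg _
    refine mul_le_mul_of_nonneg_right ?_ hS
    exact card_sq_le hn
  · -- degenerate case: `Icc 1 n` is empty
    push_neg at hn
    obtain ⟨c₀, hc₀⟩ := hn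
    have hempty : Finset.Icc (1 : Fin d → ℕ) n = ∅ := by
      apply Finset.Icc_eq_empty
      intro hle
      have h1 : (1:ℕ) ≤ n c₀ := by simpa using hle c₀
      omega
    rw [hempty]
    simp
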